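/- Let H be a nontrivial D-generated subgroup of G and let exp(G) denote the exponent of G. Then n^{Ω_D(H)} = O(HF_H(exp(G)·n)): there exist a constant C > 0 and N ∈ ℕ such that for all n ≥ N, n^{Ω_D(H)} ≤ C · HF_H(exp(G)·n). -/

import Mathlib

open scoped Classical

/-- One Hurwitz braid move: replace adjacent entries `a, b` by `a*b*a⁻¹, a`. -/
inductive BraidMove (G : Type*) [Group G] : List G → List G → Prop
  | mk (l₁ l₂ : List G) (a b : G) :
      BraidMove G (l₁ ++ a :: b :: l₂) (l₁ ++ (a * b * a⁻¹) :: a :: l₂)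

/-- Braid equivalence of tuples: the equivalence relation generated by Hurwitz moves. -/
def BraidEquiv (G : Type*) [Group G] : List G → List G → Prop :=
  Relation.EqvGen (BraidMove G)

theorem BraidMove.append_right {G : Type*} [Group G] {l l' : List G} (m : List G)
    (h : BraidMove G l l') : BraidMove G (l ++ m) (l' ++ m) := by
  cases h with
  | mk l₁ l₂ a b =>
    simpa only [List.append_assoc, List.cons_append] using BraidMove.mk (G := G) l₁ (l₂ ++ m) a b

theorem BraidMove.append_left {G : Type*} [Group G] {l l' : List G} (m : List G)
    (h : BraidMove G l l') : BraidMove G (m ++ l) (m ++ l') := by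
  cases h with
  | mk l₁ l₂ a b =>
    simpa only [← List.append_assoc] using BraidMove.mk (G := G) (m ++ l₁) l₂ a b

theorem BraidEquiv.append_right {G : Type*} [Group G] {l l' : List G} (m : List G)
    (h : BraidEquiv G l l') : BraidEquiv G (l ++ m) (l' ++ m) := by
  induction h with
  | rel x y hxy => exact Relation.EqvGen.rel _ _ (hxy.append_right m)
  | refl x => exact Relation.EqvGen.refl _
  | symm x y _ ih => exact Relation.EqvGen.symm _ _ ih
  | trans x y z _ _ ih₁ ih₂ => exact Relation.EqvGen.trans _ _ _ ih₁ ih₂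

theorem BraidEquiv.append_left {G : Type*} [Group G] {l l' : List G} (m : List G)
    (h : BraidEquiv G l l') : BraidEquiv G (m ++ l) (m ++ l') := by
  induction h with
  | rel x y hxy => exact Relation.EqvGen.rel _ _ (hxy.append_left m)
  | refl x => exact Relation.EqvGen.refl _
  | symm x y _ ih => exact Relation.EqvGen.symm _ _ ih
  | trans x y z _ _ ih₁ ih₂ => exact Relation.EqvGen.trans _ _ _ ih₁ ih₂

theorem BraidEquiv.append {G : Type*} [Group G] {a b c d : List G}
    (h₁ : BraidEquiv G a b) (h₂ : BraidEquiv G c d) : BraidEquiv G (a ++ c) (b ++ d) :=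
  Relation.EqvGen.trans _ _ _ (h₁.append_right c) (h₂.append_left b)

/-- The setoid of braid equivalence on tuples of elements of `G`. -/
def braidSetoid (G : Type*) [Group G] : Setoid (List G) :=
  Relation.EqvGen.setoid (BraidMove G)

/-- Braid-equivalence classes of tuples of elements of `G`. -/
def HurwitzCl (G : Type*) [Group G] : Type _ :=
  Quotient (braidSetoid G)

/-- Concatenation endows the set of braid-equivalence classes with a monoid structure,
the class of the empty tuple being the identity. -/
instance (G : Type*) [Group G] : Monoid (HurwitzCl G) where
  mul := Quotient.map₂ (· ++ ·) fun _ _ h₁ _ _ h₂ => BraidEquiv.append h₁ h₂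
  one := Quotient.mk (braidSetoid G) []
  mul_assoc a b c := by
    refine Quotient.inductionOn₃ a b c fun a b c => ?_
    exact congrArg (Quotient.mk _) (List.append_assoc a b c)
  one_mul a := by
    refine Quotient.inductionOn a fun a => ?_
    rfl
  mul_one a := by
    refine Quotient.inductionOn a fun a => ?_
    exact congrArg (Quotient.mk _) (List.append_nil a)

/-- The braid-equivalence class of a tuple. -/
def HurwitzCl.mk {G : Type*} [Group G] (l : List G) : HurwitzCl G :=
  Quotient.mk (braidSetoid G) l

theorem HurwitzCl.mk_mul {G : Type*} [Group G] (l l' : List G) :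
    HurwitzCl.mk l * HurwitzCl.mk l' = HurwitzCl.mk (l ++ l') := rfl

/-- The total weight `|ξ| = ∑_{c ∈ D} ξ(c)`. -/
def totalXi {G : Type*} [Group G] (D : Finset (ConjClasses G)) (ξ : ConjClasses G → ℕ) : ℕ :=
  ∑ c ∈ D, ξ c

/-- `l` is a tuple representing a component of degree `n`: it has product `1`,
length `n·|ξ|`, and exactly `n·ξ(c)` entries in the class `c`, for each `c ∈ D`. -/
def IsComponentList {G : Type*} [Group G] (D : Finset (ConjClasses G))
    (ξ : ConjClasses G → ℕ) (n : ℕ) (l : List G) : Prop :=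
  l.prod = 1 ∧ l.length = n * totalXi D ξ ∧
    ∀ c ∈ D, l.countP (fun x => decide (ConjClasses.mk x = c)) = n * ξ c

/-- The monoid of components `Comp(G,ξ)`, as a submonoid of the monoid of
braid-equivalence classes of tuples under concatenation. -/
def Comp {G : Type*} [Group G] (D : Finset (ConjClasses G)) (ξ : ConjClasses G → ℕ) :
    Submonoid (HurwitzCl G) where
  carrier := {x | ∃ n l, x = HurwitzCl.mk l ∧ IsComponentList D ξ n l}
  one_mem' := ⟨0, [], rfl, by simp [IsComponentList]⟩
  mul_mem' := by
    rintro x y ⟨n, l, rfl, hl1, hl2, hl3⟩ ⟨n', l', rfl, hl1', hl2', hl3'⟩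
    refine ⟨n + n', l ++ l', rfl, ?_, ?_, ?_⟩
    · simp [List.prod_append, hl1, hl1']
    · simp [hl2, hl2', add_mul]
    · intro c hc
      simp [List.countP_append, hl3 c hc, hl3' c hc, add_mul]

/-- A subgroup `H ≤ G` is `D`-generated if either `H = 1`, or `H` meets every class
`c ∈ D` and `H` is generated by `⋃_{c ∈ D} (c ∩ H)`. -/
def DGenerated {G : Type*} [Group G] (D : Finset (ConjClasses G)) (H : Subgroup G) : Prop :=
  H = ⊥ ∨ ((∀ c ∈ D, ∃ g ∈ H, ConjClasses.mk g = c) ∧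
    Subgroup.closure {g : G | g ∈ H ∧ ConjClasses.mk g ∈ D} = H)

/-- The splitting number `Ω_D(H) = |D_H| - |D|`, where `D_H` is the set of conjugacy
classes of `H` contained in some class of `D`, i.e. the preimage of `D` under the map
`τ_H : ConjClasses H → ConjClasses G`. -/
noncomputable def splittingNumber {G : Type*} [Group G] (D : Finset (ConjClasses G))
    (H : Subgroup G) : ℕ :=
  Nat.card (ConjClasses.map H.subtype ⁻¹' (↑D : Set (ConjClasses G))) - D.card

/-- `HF_H(n)`: the number of components of degree `n` whose group is exactly `H`. -/
noncomputable def HF {G : Type*} [Group G] (D : Finset (ConjClasses G))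
    (ξ : ConjClasses G → ℕ) (H : Subgroup G) (n : ℕ) : ℕ :=
  Nat.card {x : HurwitzCl G // ∃ l : List G, x = HurwitzCl.mk l ∧
    IsComponentList D ξ n l ∧ Subgroup.closure {g : G | g ∈ l} = H}


private lemma sum_map_ite_countP {α : Type*} (p : α → Bool) (e : ℕ) (l : List α) :
    (l.map (fun g => if p g then e else 0)).sum = e * l.countP p := by
  induction l with
  | nil => simp
  | cons a l ih =>
    by_cases h : p a <;> simp [List.countP_cons, h, ih, Nat.mul_add, Nat.add_comm]

private lemma length_eq_sum_countP {G : Type*} [Group G] (D : Finset (ConjClasses G))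
    (l : List G) (hl : ∀ x ∈ l, ConjClasses.mk x ∈ D) :
    l.length = ∑ c ∈ D, l.countP (fun x => decide (ConjClasses.mk x = c)) := by
  induction l with
  | nil => simp
  | cons a l ih =>
    have ha := hl a (by simp)
    have ih' := ih (fun x hx => hl x (List.mem_cons_of_mem _ hx))
    simp only [List.countP_cons, List.length_cons, decide_eq_true_eq]
    rw [Finset.sum_add_distrib, ← ih', Finset.sum_ite_eq D (ConjClasses.mk a) (fun _ => 1),
      if_pos ha]

private noncomputable def pCl {G : Type*} [Group G] (H : Subgroup G) (d : ConjClasses H) : G → Bool :=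
  fun x => decide (∃ h : H, (h : G) = x ∧ ConjClasses.mk h = d)


private lemma braidMove_mem_and_count {G : Type*} [Group G] {H : Subgroup G} {l l' : List G}
    (h : BraidMove G l l') :
    ((∀ x ∈ l, x ∈ H) ↔ (∀ x ∈ l', x ∈ H)) ∧
    ((∀ x ∈ l, x ∈ H) → ∀ d : ConjClasses H, l.countP (pCl H d) = l'.countP (pCl H d)) := by
  obtain ⟨l₁, l₂, a, b⟩ := h
  have hmem : (∀ x ∈ l₁ ++ a :: b :: l₂, x ∈ H) ↔ (∀ x ∈ l₁ ++ (a * b * a⁻¹) :: a :: l₂, x ∈ H) := by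
    constructor
    · intro hm x hx
      have ha : a ∈ H := hm a (by simp)
      have hb : b ∈ H := hm b (by simp)
      simp only [List.mem_append, List.mem_cons] at hx
      rcases hx with hx | hx | hx | hx
      · exact hm x (by simp [hx])
      · rw [hx]; exact mul_mem (mul_mem ha hb) (inv_mem ha)
      · rw [hx]; exact ha
      · exact hm x (by simp [hx])
    · intro hm x hx
      have ha : a ∈ H := hm a (by simp)
      have hc : a * b * a⁻¹ ∈ H := hm (a * b * a⁻¹) (by simp)
      have hb : b ∈ H := by
        have : a⁻¹ * (a * b * a⁻¹) * a ∈ H := mul_mem (mul_mem (inv_mem ha) hc) ha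
        simpa [mul_assoc] using this
      simp only [List.mem_append, List.mem_cons] at hx
      rcases hx with hx | hx | hx | hx
      · exact hm x (by simp [hx])
      · rw [hx]; exact ha
      · rw [hx]; exact hb
      · exact hm x (by simp [hx])
  refine ⟨hmem, ?_⟩
  intro hm d
  have ha : a ∈ H := hm a (by simp)
  have hb : b ∈ H := hm b (by simp)
  have key : pCl H d (a * b * a⁻¹) = pCl H d b := by
    simp only [pCl, decide_eq_decide]
    constructor
    · rintro ⟨h, hh, hd⟩
      refine ⟨(⟨a, ha⟩ : H)⁻¹ * h * ⟨a, ha⟩, ?_, ?_⟩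
      · push_cast
        rw [hh]
        group
      · rw [← hd]
        apply ConjClasses.mk_eq_mk_iff_isConj.mpr
        apply isConj_iff.mpr
        exact ⟨⟨a, ha⟩, by group⟩
    · rintro ⟨h, hh, hd⟩
      refine ⟨(⟨a, ha⟩ : H) * h * (⟨a, ha⟩ : H)⁻¹, ?_, ?_⟩
      · push_cast
        rw [hh]
      · rw [← hd]
        apply ConjClasses.mk_eq_mk_iff_isConj.mpr
        apply isConj_iff.mpr
        exact ⟨(⟨a, ha⟩ : H)⁻¹, by group⟩
  simp only [List.countP_append, List.countP_cons, key]
  omega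

private lemma braidEquiv_mem_and_count {G : Type*} [Group G] {H : Subgroup G} {l l' : List G}
    (h : BraidEquiv G l l') :
    ((∀ x ∈ l, x ∈ H) ↔ (∀ x ∈ l', x ∈ H)) ∧
    ((∀ x ∈ l, x ∈ H) → ∀ d : ConjClasses H, l.countP (pCl H d) = l'.countP (pCl H d)) := by
  induction h with
  | rel x y hxy => exact braidMove_mem_and_count hxy
  | refl x => exact ⟨Iff.rfl, fun _ _ => rfl⟩
  | symm x y hxy ih => exact ⟨ih.1.symm, fun hm d => (ih.2 (ih.1.mpr hm) d).symm⟩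
  | trans x y z _ _ ih₁ ih₂ =>
      exact ⟨ih₁.1.trans ih₂.1, fun hm d => (ih₁.2 hm d).trans (ih₂.2 (ih₁.1.mp hm) d)⟩

private lemma countP_decide_eq {α : Type*} (p : α → Prop) (inst1 inst2 : ∀ x, Decidable (p x))
    (l : List α) :
    l.countP (fun x => @decide (p x) (inst1 x)) = l.countP (fun x => @decide (p x) (inst2 x)) :=
  List.countP_congr (fun a _ => by rw [Subsingleton.elim (inst1 a) (inst2 a)])

set_option maxHeartbeats 1000000 in
/-- for a nontrivial `D`-generated subgroup `H`,
`n^{Ω_D(H)} = O(HF_H(exp(G)·n))`. -/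
theorem pow_splittingNumber_bigO_HF
    (G : Type*) [Group G] [Fintype G] [Nontrivial G]
    (D : Finset (ConjClasses G))
    (hD : ∀ c ∈ D, (1 : G) ∉ ConjClasses.carrier c)
    (hDgen : Subgroup.closure {g : G | ConjClasses.mk g ∈ D} = ⊤)
    (ξ : ConjClasses G → ℕ) (hξ : ∀ c ∈ D, 1 ≤ ξ c)
    (H : Subgroup G) (hHne : H ≠ ⊥) (hHgen : DGenerated D H) :
    ∃ C : ℕ, 0 < C ∧ ∃ N : ℕ, ∀ n ≥ N,
      n ^ splittingNumber D H ≤ C * HF D ξ H (Monoid.exponent G * n) := by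
  classical
  rcases hHgen with hbot | ⟨hmeet, hclos⟩
  · exact absurd hbot hHne
  set e := Monoid.exponent G with he_def
  have he : 0 < e := Nat.pos_of_ne_zero Monoid.exponent_ne_zero_of_finite
  haveI : Fintype ↥H := Fintype.ofFinite _
  haveI : Fintype (ConjClasses ↥H) := Fintype.ofFinite _
  haveI : Nonempty (ConjClasses ↥H) := ⟨ConjClasses.mk 1⟩
  set τ : ConjClasses ↥H → ConjClasses G := ConjClasses.map H.subtype with hτ_def
  set Tfin : Finset (ConjClasses ↥H) := Finset.univ.filter (fun d => τ d ∈ D) with hTfin_def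
  -- star classes
  have hstar : ∀ c : ConjClasses G, c ∈ D → ∃ d : ConjClasses ↥H, τ d = c := by
    intro c hc
    obtain ⟨g, hgH, hgc⟩ := hmeet c hc
    exact ⟨ConjClasses.mk (⟨g, hgH⟩ : H), hgc⟩
  choose! dstar hdstar using hstar
  set Sfree : Finset (ConjClasses ↥H) := Tfin \ D.image dstar with hSfree_def
  have himsub : D.image dstar ⊆ Tfin := by
    intro d hd
    obtain ⟨c, hc, rfl⟩ := Finset.mem_image.mp hd
    simp only [hTfin_def, Finset.mem_filter, Finset.mem_univ, true_and]
    rw [hdstar c hc]; exact hc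
  have hstar_mem_im : ∀ c ∈ D, dstar c ∈ D.image dstar := by
    intro c hc; exact Finset.mem_image.mpr ⟨c, hc, rfl⟩
  have hcardim : (D.image dstar).card = D.card := by
    apply Finset.card_image_of_injOn
    intro c hc c' hc' hcc
    rw [← hdstar c hc, ← hdstar c' hc', hcc]
  have hsplit : splittingNumber D H = Sfree.card := by
    rw [hSfree_def, Finset.card_sdiff_of_subset himsub, hcardim]
    unfold splittingNumber
    congr 1
    have hset : (ConjClasses.map H.subtype ⁻¹' (↑D : Set (ConjClasses G))) = ↑Tfin := by
      ext d
      simp [hTfin_def, hτ_def]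
    rw [hset, Nat.card_coe_set_eq, Set.ncard_coe_finset]
  -- representatives
  have hrepex : ∀ d : ConjClasses ↥H, ∃ h : ↥H, ConjClasses.mk h = d :=
    fun d => ConjClasses.mk_surjective d
  choose rep hrep using hrepex
  have hτrep : ∀ d, ConjClasses.mk ((rep d : G)) = τ d := by
    intro d
    have := congrArg (ConjClasses.map H.subtype) (hrep d)
    exact this
  -- the generating list
  set S0 : Finset G := Finset.univ.filter (fun g => g ∈ H ∧ ConjClasses.mk g ∈ D) with hS0_def
  set S0l : List G := S0.toList with hS0l_def
  set Wf : ConjClasses G → ℕ := fun c => S0l.countP (fun x => decide (ConjClasses.mk x = c)) with hWf_def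
  set Wt : ℕ := S0l.length with hWt_def
  set K : ℕ := Sfree.card + 1 with hK_def
  have hK : 0 < K := by omega
  refine ⟨(2 * K) ^ Sfree.card, pow_pos (by omega) _, K * (Wt + 1), ?_⟩
  intro n hn
  set q := n / K with hq_def
  have hq1 : Wt + 1 ≤ q := by
    rw [hq_def, Nat.le_div_iff_mul_le hK, mul_comm]; exact hn
  have hKq : K * q ≤ n := by
    rw [hq_def, mul_comm]; exact Nat.div_mul_le_self n K
  have hn2 : n ≤ 2 * K * q := by
    have h1 : K * q + n % K = n := by rw [hq_def]; exact Nat.div_add_mod n K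
    have h2 : n % K < K := Nat.mod_lt n hK
    have h3 : K ≤ K * q := Nat.le_mul_of_pos_right K (by omega)
    nlinarith
  -- base list
  set wl : List G := (S0l.map (fun g => List.replicate e g)).flatten with hwl_def
  have hwl_mem : ∀ x ∈ wl, x ∈ S0 := by
    intro x hx
    rw [hwl_def] at hx
    simp only [List.mem_flatten, List.mem_map] at hx
    obtain ⟨_, ⟨g, hg, rfl⟩, hx⟩ := hx
    rw [List.eq_of_mem_replicate hx]
    exact Finset.mem_toList.mp hg
  have hS0spec : ∀ g ∈ S0, g ∈ H ∧ ConjClasses.mk g ∈ D := by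
    intro g hg
    exact (Finset.mem_filter.mp hg).2
  have hwl_prod : wl.prod = 1 := by
    rw [hwl_def, List.prod_flatten, List.map_map]
    apply List.prod_eq_one
    intro x hx
    obtain ⟨g, _, rfl⟩ := List.mem_map.mp hx
    simp [List.prod_replicate, he_def, Monoid.pow_exponent_eq_one]
  have hwl_count : ∀ c, wl.countP (fun x => decide (ConjClasses.mk x = c)) = e * Wf c := by
    intro c
    rw [hwl_def, List.countP_flatten, List.map_map]
    have hfun : (List.countP (fun x => decide (ConjClasses.mk x = c)) ∘ fun g => List.replicate e g)
        = fun g => if (fun x => decide (ConjClasses.mk x = c)) g then e else 0 := by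
      funext g
      exact List.countP_replicate
    rw [hfun, sum_map_ite_countP]
  -- the padding
  set pad : (ConjClasses ↥H → ℕ) → List G :=
    fun m => (Tfin.toList.map (fun d => List.replicate (e * m d) ((rep d : G)))).flatten with hpad_def
  have hpad_mem : ∀ m, ∀ x ∈ pad m, ∃ d ∈ Tfin, x = (rep d : G) := by
    intro m x hx
    rw [hpad_def] at hx
    simp only [List.mem_flatten, List.mem_map] at hx
    obtain ⟨_, ⟨d, hd, rfl⟩, hx⟩ := hx
    exact ⟨d, Finset.mem_toList.mp hd, List.eq_of_mem_replicate hx⟩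
  have hpad_prod : ∀ m, (pad m).prod = 1 := by
    intro m
    rw [hpad_def, List.prod_flatten, List.map_map]
    apply List.prod_eq_one
    intro x hx
    obtain ⟨d, _, rfl⟩ := List.mem_map.mp hx
    simp only [Function.comp_apply, List.prod_replicate]
    rw [mul_comm, pow_mul]
    simp [he_def, Monoid.pow_exponent_eq_one]
  have hpad_count : ∀ m c, (pad m).countP (fun x => decide (ConjClasses.mk x = c))
      = ∑ d ∈ Tfin.filter (fun d => τ d = c), e * m d := by
    intro m c
    rw [hpad_def, List.countP_flatten, List.map_map]
    have hfun : (List.countP (fun x => decide (ConjClasses.mk x = c)) ∘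
        fun d => List.replicate (e * m d) ((rep d : G)))
        = fun d => if τ d = c then e * m d else 0 := by
      funext d
      rw [Function.comp_apply, List.countP_replicate, hτrep d]
      simp
    rw [hfun, Finset.sum_map_toList]
    exact (Finset.sum_filter _ _).symm
  have hpad_cntH : ∀ m (d : ConjClasses ↥H), d ∈ Tfin →
      (pad m).countP (pCl H d) = e * m d := by
    intro m d hdT
    rw [hpad_def, List.countP_flatten, List.map_map]
    have hfun : (List.countP (pCl H d) ∘ fun d' => List.replicate (e * m d') ((rep d' : G)))
        = fun d' => if d' = d then e * m d' else 0 := by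
      funext d'
      rw [Function.comp_apply, List.countP_replicate]
      have hcond : (pCl H d) ((rep d' : G)) = decide (d' = d) := by
        simp only [pCl, decide_eq_decide]
        constructor
        · rintro ⟨h, hh, hmk⟩
          have hhe : h = rep d' := Subtype.ext hh
          rw [hhe] at hmk
          rw [← hmk, hrep d']
        · rintro rfl
          exact ⟨rep d', rfl, hrep d'⟩
      rw [hcond]
      simp
    rw [hfun, Finset.sum_map_toList, Finset.sum_ite_eq' Tfin d (fun d' => e * m d'), if_pos hdT]
  -- fiber decomposition
  have hFc : ∀ c ∈ D, Tfin.filter (fun d => τ d = c)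
      = insert (dstar c) (Sfree.filter (fun d => τ d = c)) := by
    intro c hc
    ext d
    simp only [Finset.mem_filter, Finset.mem_insert, hSfree_def, Finset.mem_sdiff]
    constructor
    · rintro ⟨hdT, hdc⟩
      by_cases him : d ∈ D.image dstar
      · obtain ⟨c', hc', rfl⟩ := Finset.mem_image.mp him
        left
        rw [hdstar c' hc'] at hdc
        rw [hdc]
      · right; exact ⟨⟨hdT, him⟩, hdc⟩
    · rintro (rfl | ⟨⟨hdT, _⟩, hdc⟩)
      · exact ⟨himsub (hstar_mem_im c hc), hdstar c hc⟩
      · exact ⟨hdT, hdc⟩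
  have hdnot : ∀ c ∈ D, dstar c ∉ Sfree.filter (fun d => τ d = c) := by
    intro c hc hmem
    rw [Finset.mem_filter, hSfree_def, Finset.mem_sdiff] at hmem
    exact hmem.1.2 (hstar_mem_im c hc)
  -- per-fbar data
  set ff : (↥Sfree → Fin q) → ConjClasses ↥H → ℕ :=
    fun fb d => if h : d ∈ Sfree then (fb ⟨d, h⟩ : ℕ) else 0 with hff_def
  set mm : (↥Sfree → Fin q) → ConjClasses ↥H → ℕ :=
    fun fb d => if d ∈ Sfree then ff fb d
      else n * ξ (τ d) - Wf (τ d) - ∑ d' ∈ Sfree.filter (fun d' => τ d' = τ d), ff fb d' with hmm_def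
  have hq0 : 0 < q := by omega
  have hffle : ∀ fb d, ff fb d ≤ q - 1 := by
    intro fb d
    rw [hff_def]
    dsimp only
    split
    · have := (fb ⟨d, by assumption⟩).isLt
      omega
    · omega
  have hWfle : ∀ c, Wf c ≤ Wt := by
    intro c
    rw [hWf_def, hWt_def]
    exact List.countP_le_length
  have hB : ∀ fb, ∀ c ∈ D,
      Wf c + ∑ d' ∈ Sfree.filter (fun d' => τ d' = c), ff fb d' ≤ n * ξ c := by
    intro fb c hc
    have h1 : ∑ d' ∈ Sfree.filter (fun d' => τ d' = c), ff fb d'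
        ≤ (Sfree.filter (fun d' => τ d' = c)).card * (q - 1) := by
      apply Finset.sum_le_card_nsmul
      intro d' _
      exact hffle fb d'
    have h2 : (Sfree.filter (fun d' => τ d' = c)).card ≤ Sfree.card :=
      Finset.card_filter_le _ _
    have h3 : Wf c + ∑ d' ∈ Sfree.filter (fun d' => τ d' = c), ff fb d'
        ≤ (q - 1) + (K - 1) * (q - 1) := by
      have := hWfle c
      have h4 : (Sfree.filter (fun d' => τ d' = c)).card * (q - 1) ≤ (K - 1) * (q - 1) :=
        Nat.mul_le_mul_right _ (by omega)
      omega
    have h5 : (q - 1) + (K - 1) * (q - 1) = K * (q - 1) := by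
      have hK1 : K - 1 + 1 = K := by omega
      calc (q - 1) + (K - 1) * (q - 1) = ((K - 1) + 1) * (q - 1) := by ring
        _ = K * (q - 1) := by rw [hK1]
    have h6 : K * (q - 1) ≤ K * q := Nat.mul_le_mul_left _ (by omega)
    have h7 : n ≤ n * ξ c := Nat.le_mul_of_pos_right _ (hξ c hc)
    omega
  have hCsum : ∀ fb, ∀ c ∈ D,
      ∑ d ∈ Tfin.filter (fun d => τ d = c), mm fb d = n * ξ c - Wf c := by
    intro fb c hc
    rw [hFc c hc, Finset.sum_insert (hdnot c hc)]
    have h1 : mm fb (dstar c)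
        = n * ξ c - Wf c - ∑ d' ∈ Sfree.filter (fun d' => τ d' = c), ff fb d' := by
      have hns : dstar c ∉ Sfree := by
        intro h
        rw [hSfree_def, Finset.mem_sdiff] at h
        exact h.2 (hstar_mem_im c hc)
      rw [hmm_def]
      dsimp only
      rw [if_neg hns, hdstar c hc]
    have h2 : ∀ d ∈ Sfree.filter (fun d' => τ d' = c), mm fb d = ff fb d := by
      intro d hd
      rw [hmm_def]
      dsimp only
      rw [if_pos (Finset.mem_filter.mp hd).1]
    rw [h1, Finset.sum_congr rfl h2]
    have hb := hB fb c hc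
    set Sc := ∑ d' ∈ Sfree.filter (fun d' => τ d' = c), ff fb d' with hSc
    omega
  -- the component lists
  set lst : (↥Sfree → Fin q) → List G := fun fb => wl ++ pad (mm fb) with hlst_def
  have hmemH : ∀ fb, ∀ x ∈ lst fb, x ∈ H := by
    intro fb x hx
    rw [hlst_def] at hx
    rcases List.mem_append.mp hx with hx | hx
    · exact (hS0spec x (hwl_mem x hx)).1
    · obtain ⟨d, _, rfl⟩ := hpad_mem _ x hx
      exact (rep d).2
  have hmemD : ∀ fb, ∀ x ∈ lst fb, ConjClasses.mk x ∈ D := by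
    intro fb x hx
    rcases List.mem_append.mp hx with hx | hx
    · exact (hS0spec x (hwl_mem x hx)).2
    · obtain ⟨d, hdT, rfl⟩ := hpad_mem _ x hx
      rw [hτrep d]
      rw [hTfin_def] at hdT
      exact (Finset.mem_filter.mp hdT).2
  have hcount : ∀ fb, ∀ c ∈ D,
      (lst fb).countP (fun x => decide (ConjClasses.mk x = c)) = (e * n) * ξ c := by
    intro fb c hc
    rw [hlst_def]
    dsimp only
    rw [List.countP_append, hwl_count c, hpad_count (mm fb) c, ← Finset.mul_sum,
      hCsum fb c hc]
    have hWle : Wf c ≤ n * ξ c := le_trans (Nat.le_add_right _ _) (hB fb c hc)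
    rw [← Nat.mul_add, Nat.add_sub_cancel' hWle, mul_assoc]
  have hcomp : ∀ fb, IsComponentList D ξ (Monoid.exponent G * n) (lst fb) := by
    intro fb
    refine ⟨?_, ?_, ?_⟩
    · rw [hlst_def]
      dsimp only
      rw [List.prod_append, hwl_prod, hpad_prod, one_mul]
    · rw [length_eq_sum_countP D (lst fb) (hmemD fb)]
      refine Eq.trans (Finset.sum_congr rfl
        (fun c hc => Eq.trans (countP_decide_eq _ _ _ _) (hcount fb c hc))) ?_
      rw [← Finset.mul_sum]
      simp only [totalXi, he_def]
    · intro c hc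
      exact Eq.trans (countP_decide_eq _ _ _ _) (hcount fb c hc)
  have hclosL : ∀ fb, Subgroup.closure {g : G | g ∈ lst fb} = H := by
    intro fb
    apply le_antisymm
    · rw [Subgroup.closure_le]
      intro x hx
      exact hmemH fb x hx
    · conv_lhs => rw [← hclos]
      apply Subgroup.closure_mono
      intro g hg
      have hgS0 : g ∈ S0l := by
        rw [hS0l_def]
        exact Finset.mem_toList.mpr (Finset.mem_filter.mpr ⟨Finset.mem_univ g, hg⟩)
      have hgw : g ∈ wl := by
        rw [hwl_def]
        exact List.mem_flatten.mpr ⟨List.replicate e g, List.mem_map.mpr ⟨g, hgS0, rfl⟩,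
          List.mem_replicate.mpr ⟨he.ne', rfl⟩⟩
      show g ∈ lst fb
      rw [hlst_def]
      exact List.mem_append.mpr (Or.inl hgw)
  -- the injection
  set P : HurwitzCl G → Prop := fun x => ∃ l : List G, x = HurwitzCl.mk l ∧
      IsComponentList D ξ (Monoid.exponent G * n) l ∧
      Subgroup.closure {g : G | g ∈ l} = H with hP_def
  set Φ : (↥Sfree → Fin q) → {x : HurwitzCl G // P x} :=
    fun fb => ⟨HurwitzCl.mk (lst fb), lst fb, rfl, hcomp fb, hclosL fb⟩ with hΦ_def
  have hΦinj : Function.Injective Φ := by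
    intro fb fb' hEq
    have hqe : HurwitzCl.mk (lst fb) = HurwitzCl.mk (lst fb') := congrArg Subtype.val hEq
    have hbe : BraidEquiv G (lst fb) (lst fb') := Quotient.exact hqe
    have hcnt := (braidEquiv_mem_and_count (H := H) hbe).2 (hmemH fb)
    funext x
    obtain ⟨d, hd⟩ := x
    have hdT : d ∈ Tfin := by
      rw [hSfree_def, Finset.mem_sdiff] at hd
      exact hd.1
    have hcd := hcnt d
    rw [hlst_def] at hcd
    simp only [List.countP_append] at hcd
    rw [hpad_cntH (mm fb) d hdT, hpad_cntH (mm fb') d hdT] at hcd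
    have hmeq : mm fb d = mm fb' d := by
      have := Nat.eq_of_mul_eq_mul_left he (by omega : e * mm fb d = e * mm fb' d)
      exact this
    rw [hmm_def] at hmeq
    dsimp only at hmeq
    rw [if_pos hd, if_pos hd, hff_def] at hmeq
    dsimp only at hmeq
    rw [dif_pos hd, dif_pos hd] at hmeq
    exact Fin.ext hmeq
  -- finiteness
  have hfin : Finite {x : HurwitzCl G // P x} := by
    set F : {x : HurwitzCl G // P x} →
        {l : List G // l.length = (Monoid.exponent G * n) * totalXi D ξ} :=
      fun x => ⟨x.2.choose, x.2.choose_spec.2.1.2.1⟩ with hF_def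
    have hFinj : Function.Injective F := by
      intro x y hxy
      apply Subtype.ext
      have h1 : x.2.choose = y.2.choose := congrArg Subtype.val hxy
      rw [x.2.choose_spec.1, y.2.choose_spec.1, h1]
    haveI : Finite {l : List G // l.length = (Monoid.exponent G * n) * totalXi D ξ} :=
      inferInstanceAs (Finite (List.Vector G ((Monoid.exponent G * n) * totalXi D ξ)))
    exact Finite.of_injective F hFinj
  have hcard : q ^ Sfree.card ≤ HF D ξ H (Monoid.exponent G * n) := by
    have h1 := Nat.card_le_card_of_injective Φ hΦinj
    have h2 : Nat.card (↥Sfree → Fin q) = q ^ Sfree.card := by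
      rw [Nat.card_eq_fintype_card]
      simp
    rw [h2] at h1
    exact h1
  calc n ^ splittingNumber D H = n ^ Sfree.card := by rw [hsplit]
    _ ≤ (2 * K * q) ^ Sfree.card := Nat.pow_le_pow_left hn2 _
    _ = (2 * K) ^ Sfree.card * q ^ Sfree.card := mul_pow _ _ _
    _ ≤ (2 * K) ^ Sfree.card * HF D ξ H (Monoid.exponent G * n) :=
        Nat.mul_le_mul_left _ hcard
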